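/- Let C : (0,∞) → (0,∞), let p̃ ∈ (0,∞), and suppose lim_{K→∞} (log K)⁻¹ log(1/C(K)) = p̃. Then there exist positive functions g₁, g₂ regularly varying at infinity with index -p̃ and K₀ > 0 such that g₁(K) ≤ C(K) ≤ g₂(K) for all K > K₀. -/

import Mathlib

open Real Filter Set MeasureTheory intervalIntegral

private lemma aux_shift_tendsto (ε : ℝ → ℝ) (hanti : Antitone ε)
    (hnn : ∀ t, 0 ≤ ε t) (hto : Tendsto ε atTop (nhds 0)) (c : ℝ) :
    Tendsto (fun t => (∫ s in (0:ℝ)..(t + c), ε s) - ∫ s in (0:ℝ)..t, ε s)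
      atTop (nhds 0) := by
  have hint : ∀ a b : ℝ, IntervalIntegrable ε volume a b := fun a b =>
    hanti.intervalIntegrable
  have key : ∀ t : ℝ, ‖(∫ s in (0:ℝ)..(t + c), ε s) - ∫ s in (0:ℝ)..t, ε s‖
      ≤ ε (t - |c|) * |c| := by
    intro t
    have h1 : (∫ s in (0:ℝ)..(t + c), ε s) - ∫ s in (0:ℝ)..t, ε s
        = ∫ s in t..(t + c), ε s := by
      rw [← integral_add_adjacent_intervals (hint 0 t) (hint t (t + c))]
      ring
    rw [h1]
    have := norm_integral_le_of_norm_le_const (a := t) (b := t + c)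
      (C := ε (t - |c|)) (f := ε) ?_
    · calc ‖∫ s in t..(t + c), ε s‖ ≤ ε (t - |c|) * |t + c - t| := this
        _ = ε (t - |c|) * |c| := by ring_nf
    · intro x hx
      have hx1 : min t (t + c) < x := hx.1
      have hxge : t - |c| ≤ x := by
        rcases le_or_gt 0 c with h | h
        · have : min t (t + c) = t := min_eq_left (by linarith)
          rw [this] at hx1
          have : |c| ≥ 0 := abs_nonneg c
          linarith
        · have : min t (t + c) = t + c := min_eq_right (by linarith)
          rw [this] at hx1
          rw [abs_of_neg h]
          linarith
      rw [Real.norm_eq_abs, abs_of_nonneg (hnn x)]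
      exact hanti hxge
  refine squeeze_zero_norm key ?_
  have h1 : Tendsto (fun t : ℝ => t - |c|) atTop atTop :=
    tendsto_atTop_add_const_right atTop (-|c|) tendsto_id
  have := (hto.comp h1).mul_const |c|
  simpa using this

private lemma aux_integral_ge (ε : ℝ → ℝ) (hanti : Antitone ε) (hnn : ∀ t, 0 ≤ ε t)
    {t : ℝ} (ht : 0 ≤ t) : t * ε t ≤ ∫ s in (0:ℝ)..t, ε s := by
  have h1 : (∫ s in (0:ℝ)..t, (fun _ => ε t) s) ≤ ∫ s in (0:ℝ)..t, ε s := by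
    apply integral_mono_on ht (intervalIntegrable_const) hanti.intervalIntegrable
    intro x hx
    exact hanti hx.2
  simpa using h1

theorem weak_pareto_of_log_limit (C : ℝ → ℝ) (p : ℝ) (hp : 0 < p)
    (hCpos : ∀ K > 0, 0 < C K)
    (hlim : Filter.Tendsto (fun K => (Real.log K)⁻¹ * Real.log (1 / C K))
      Filter.atTop (nhds p)) :
    ∃ g₁ g₂ : ℝ → ℝ, (∀ x > 0, 0 < g₁ x) ∧ (∀ x > 0, 0 < g₂ x) ∧
      (∀ lam > 0, Filter.Tendsto (fun x => g₁ (lam * x) / g₁ x) Filter.atTop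
        (nhds (lam ^ (-p)))) ∧
      (∀ lam > 0, Filter.Tendsto (fun x => g₂ (lam * x) / g₂ x) Filter.atTop
        (nhds (lam ^ (-p)))) ∧
      ∃ K₀ > 0, ∀ K > K₀, g₁ K ≤ C K ∧ C K ≤ g₂ K := by
  set f : ℝ → ℝ := fun t => Real.log (C (Real.exp t)) + p * t with hf_def
  -- Step 1: f t / t → 0
  have hcomp : Tendsto (fun t => (Real.log (Real.exp t))⁻¹ *
      Real.log (1 / C (Real.exp t))) atTop (nhds p) :=
    hlim.comp Real.tendsto_exp_atTop
  have hf0 : Tendsto (fun t => f t / t) atTop (nhds 0) := by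
    have h2 : Tendsto (fun t => p - (Real.log (Real.exp t))⁻¹ *
        Real.log (1 / C (Real.exp t))) atTop (nhds (p - p)) :=
      tendsto_const_nhds.sub hcomp
    rw [sub_self] at h2
    refine h2.congr' ?_
    filter_upwards [eventually_gt_atTop (0:ℝ)] with t ht
    have hC : 0 < C (Real.exp t) := hCpos _ (Real.exp_pos t)
    rw [Real.log_exp, one_div, Real.log_inv]
    field_simp [hf_def]
    ring
  -- Step 2: choose T₀
  have h1 : ∀ᶠ s in atTop, |f s / s| ≤ 1 := by
    have := hf0.eventually (eventually_abs_sub_lt 0 one_pos)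
    filter_upwards [this] with s hs
    simp only [sub_zero] at hs
    exact hs.le
  obtain ⟨T₀', hT₀'⟩ := h1.exists_forall_of_atTop
  set T₀ : ℝ := max T₀' 1 with hT₀_def
  have hT₀1 : (1:ℝ) ≤ T₀ := le_max_right _ _
  have hT₀bd : ∀ s ≥ T₀, |f s / s| ≤ 1 := fun s hs => hT₀' s (le_trans (le_max_left _ _) hs)
  -- Step 3: define ε
  set ε : ℝ → ℝ := fun t => sSup ((fun s => |f s / s|) '' Ici (max t T₀)) with hε_def
  have hne : ∀ t : ℝ, ((fun s => |f s / s|) '' Ici (max t T₀)).Nonempty :=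
    fun t => ⟨_, ⟨max t T₀, self_mem_Ici, rfl⟩⟩
  have hbdd : ∀ t : ℝ, BddAbove ((fun s => |f s / s|) '' Ici (max t T₀)) := by
    intro t
    refine ⟨1, ?_⟩
    rintro y ⟨s, hs, rfl⟩
    exact hT₀bd s (le_trans (le_max_right _ _) hs)
  have hεnn : ∀ t, 0 ≤ ε t := by
    intro t
    have := le_csSup (hbdd t) ⟨max t T₀, self_mem_Ici, rfl⟩
    exact le_trans (abs_nonneg _) this
  have hεanti : Antitone ε := by
    intro t₁ t₂ h
    apply csSup_le_csSup (hbdd t₁) (hne t₂)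
    apply image_mono
    exact Ici_subset_Ici.mpr (max_le_max h le_rfl)
  have hεge : ∀ t ≥ T₀, |f t / t| ≤ ε t := by
    intro t ht
    apply le_csSup (hbdd t)
    exact ⟨t, by simp [max_eq_left ht], rfl⟩
  have hεto : Tendsto ε atTop (nhds 0) := by
    rw [NormedAddCommGroup.tendsto_nhds_zero]
    intro δ hδ
    have := hf0.eventually (eventually_abs_sub_lt 0 (half_pos hδ))
    simp only [sub_zero] at this
    obtain ⟨S, hS⟩ := this.exists_forall_of_atTop
    filter_upwards [eventually_ge_atTop S] with t ht
    rw [Real.norm_eq_abs, abs_of_nonneg (hεnn t)]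
    have : ε t ≤ δ / 2 := by
      apply csSup_le (hne t)
      rintro y ⟨s, hs, rfl⟩
      have hst : S ≤ s := le_trans ht (le_trans (le_max_left _ _) hs)
      exact (hS s hst).le
    linarith
  -- Step 4: define u
  set u : ℝ → ℝ := fun t => ∫ s in (0:ℝ)..t, ε s with hu_def
  have hushift : ∀ c : ℝ, Tendsto (fun t => u (t + c) - u t) atTop (nhds 0) :=
    fun c => aux_shift_tendsto ε hεanti hεnn hεto c
  have huge : ∀ t, T₀ ≤ t → |f t| ≤ u t := by
    intro t ht
    have ht0 : (0:ℝ) < t := lt_of_lt_of_le one_pos (le_trans hT₀1 ht)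
    have h1 := hεge t ht
    have h2 := aux_integral_ge ε hεanti hεnn ht0.le
    have h3 : |f t| = t * |f t / t| := by
      rw [abs_div, abs_of_pos ht0]; field_simp
    rw [h3]
    calc t * |f t / t| ≤ t * ε t := mul_le_mul_of_nonneg_left h1 ht0.le
      _ ≤ u t := h2
  -- the key ratio lemma
  have key : ∀ v : ℝ → ℝ, (∀ c, Tendsto (fun t => v (t + c) - v t) atTop (nhds 0)) →
      ∀ lam : ℝ, 0 < lam → Tendsto (fun x =>
        ((lam * x) ^ (-p) * Real.exp (v (Real.log (lam * x)))) /
        (x ^ (-p) * Real.exp (v (Real.log x)))) atTop (nhds (lam ^ (-p))) := by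
    intro v hv lam hlam
    have h1 : Tendsto (fun x => v (Real.log x + Real.log lam) - v (Real.log x))
        atTop (nhds 0) := (hv (Real.log lam)).comp Real.tendsto_log_atTop
    have h2 : Tendsto (fun x => Real.exp
        (v (Real.log x + Real.log lam) - v (Real.log x))) atTop (nhds 1) := by
      have := (Real.continuous_exp.tendsto 0).comp h1
      simpa [Function.comp_def] using this
    have h3 := (tendsto_const_nhds (x := lam ^ (-p)) (f := atTop)).mul h2
    rw [mul_one] at h3
    refine h3.congr' ?_
    filter_upwards [eventually_gt_atTop (0:ℝ)] with x hx
    have hxp : (0:ℝ) < x ^ (-p) := Real.rpow_pos_of_pos hx _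
    rw [Real.mul_rpow hlam.le hx.le, Real.log_mul hlam.ne' hx.ne',
      add_comm (Real.log lam) (Real.log x), Real.exp_sub]
    field_simp
  refine ⟨fun x => x ^ (-p) * Real.exp (-(u (Real.log x))),
    fun x => x ^ (-p) * Real.exp (u (Real.log x)), ?_, ?_, ?_, ?_, ?_⟩
  · intro x hx
    exact mul_pos (Real.rpow_pos_of_pos hx _) (Real.exp_pos _)
  · intro x hx
    exact mul_pos (Real.rpow_pos_of_pos hx _) (Real.exp_pos _)
  · intro lam hlam
    exact key (fun t => -(u t)) (fun c => by
      have h := (hushift c).neg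
      rw [neg_zero] at h
      refine h.congr fun t => by ring) lam hlam
  · intro lam hlam
    exact key u hushift lam hlam
  · refine ⟨Real.exp T₀, Real.exp_pos _, ?_⟩
    intro K hK
    have hK0 : (0:ℝ) < K := lt_trans (Real.exp_pos _) hK
    have hT : T₀ < Real.log K := by
      have := Real.log_lt_log (Real.exp_pos T₀) hK
      rwa [Real.log_exp] at this
    have hft : |f (Real.log K)| ≤ u (Real.log K) := huge _ hT.le
    have hfeq : f (Real.log K) = Real.log (C K) + p * Real.log K := by
      simp [hf_def, Real.exp_log hK0]
    rw [hfeq, abs_le] at hft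
    have hCK : 0 < C K := hCpos K hK0
    constructor
    · have h5 : Real.exp (Real.log K * (-p) + -(u (Real.log K))) ≤
          Real.exp (Real.log (C K)) := by
        apply Real.exp_le_exp.mpr
        nlinarith [hft.1]
      rw [Real.exp_log hCK] at h5
      calc K ^ (-p) * Real.exp (-(u (Real.log K)))
          = Real.exp (Real.log K * (-p) + -(u (Real.log K))) := by
            rw [Real.rpow_def_of_pos hK0, Real.exp_add]
        _ ≤ C K := h5
    · have h5 : Real.exp (Real.log (C K)) ≤
          Real.exp (Real.log K * (-p) + u (Real.log K)) := by
        apply Real.exp_le_exp.mpr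
        nlinarith [hft.2]
      rw [Real.exp_log hCK] at h5
      calc C K ≤ Real.exp (Real.log K * (-p) + u (Real.log K)) := h5
        _ = K ^ (-p) * Real.exp (u (Real.log K)) := by
            rw [Real.rpow_def_of_pos hK0, Real.exp_add]
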